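/- Let X be a set and A a (not necessarily unital) subalgebra of the algebra of real-valued functions on X whose elements are bounded, and let f¹, …, f^M ∈ A with pointwise maximum f := f¹ ∨ ⋯ ∨ f^M. Then for every ε > 0 there exists f_ε ∈ A such that min_{1≤m≤M} f^m(x) ≤ f_ε(x) ≤ max_{1≤m≤M} f^m(x) for every x ∈ X and sup_{x∈X} |f_ε(x) − f(x)| ≤ ε; moreover, if δ is an extended semidistance on X, S ⊆ X and L ∈ [0,∞) are such that Lip(f^m, S, δ) ≤ L for every 1 ≤ m ≤ M, then f_ε can be chosen so that in addition Lip(f_ε, S, δ) ≤ L. -/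

import Mathlib

open scoped ENNReal NNReal

open Polynomial

/-- The Lipschitz constant of `f` on the set `U` with respect to the extended
semidistance `δ`. -/
noncomputable def eLip {X : Type*} (δ : X → X → ℝ≥0∞) (f : X → ℝ) (U : Set X) : ℝ≥0∞ :=
  sInf {L : ℝ≥0∞ | ∀ y ∈ U, ∀ z ∈ U, ENNReal.ofReal |f y - f z| ≤ L * δ y z}


/-- Formal antiderivative of a real polynomial. -/
noncomputable def antider (p : Polynomial ℝ) : Polynomial ℝ :=
  p.sum fun n a => C (a / (n+1)) * X ^ (n+1)

lemma antider_derivative (p : Polynomial ℝ) : derivative (antider p) = p := by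
  unfold antider
  rw [Polynomial.sum, map_sum]
  have : ∀ n ∈ p.support, derivative (C (p.coeff n / (n+1)) * X ^ (n+1)) = C (p.coeff n) * X ^ n := by
    intro n _
    rw [derivative_C_mul_X_pow]
    have h1 : p.coeff n / (↑n+1) * (↑(n+1) : ℝ) = p.coeff n := by
      push_cast
      field_simp
    have h2 : n + 1 - 1 = n := by omega
    rw [h1, h2]
  rw [Finset.sum_congr rfl this]
  exact p.sum_C_mul_X_pow_eq

lemma antider_eval_zero (p : Polynomial ℝ) : (antider p).eval 0 = 0 := by
  unfold antider
  rw [Polynomial.sum, eval_finset_sum]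
  apply Finset.sum_eq_zero
  intro n _
  simp [zero_pow]

/-- The Newton–Schulz sign iteration polynomials. -/
noncomputable def Wp : ℕ → Polynomial ℝ
  | 0 => X
  | (k+1) => C (3/2) * Wp k - C (1/2) * (Wp k) ^ 3

lemma Wp_bounds (k : ℕ) (u : ℝ) (h0 : 0 ≤ u) (h1 : u ≤ 1) :
    u ≤ (Wp k).eval u ∧ (Wp k).eval u ≤ 1 ∧ 1 - (Wp k).eval u ≤ (1 - u/2) ^ k := by
  induction k with
  | zero => refine ⟨?_, ?_, ?_⟩ <;> simp [Wp] <;> linarith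
  | succ k ih =>
    obtain ⟨ha, hb, hc⟩ := ih
    set x := (Wp k).eval u with hx
    have hx0 : 0 ≤ x := le_trans h0 ha
    have he : (Wp (k+1)).eval u = 3/2 * x - 1/2 * x^3 := by simp [Wp]; rfl
    have hu2 : (0:ℝ) ≤ 1 - u/2 := by linarith
    have key : x ≤ 3/2 * x - 1/2 * x^3 := by nlinarith [mul_nonneg (mul_nonneg hx0 (sub_nonneg.2 hb)) (by linarith : (0:ℝ) ≤ 1 + x)]
    refine ⟨?_, ?_, ?_⟩
    · rw [he]; linarith
    · rw [he]; nlinarith [mul_nonneg (mul_nonneg (sub_nonneg.2 hb) (sub_nonneg.2 hb)) (by linarith : (0:ℝ) ≤ x + 2)]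
    · rw [he]
      have h5 : 1 - (3/2 * x - 1/2 * x^3) = (1-x)*(1 - x/2 - x^2/2) := by ring
      have h6 : 1 - x/2 - x^2/2 ≤ 1 - u/2 := by nlinarith
      have h7 : (1-x)*(1 - x/2 - x^2/2) ≤ (1-x)*(1-u/2) := by nlinarith
      have h8 : (1-x)*(1-u/2) ≤ (1-u/2)^k * (1-u/2) := by nlinarith [pow_nonneg hu2 k]
      rw [h5]
      calc (1-x)*(1 - x/2 - x^2/2) ≤ (1-u/2)^k * (1-u/2) := le_trans h7 h8
        _ = (1-u/2)^(k+1) := by ring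

lemma Wp_odd (k : ℕ) (u : ℝ) : (Wp k).eval (-u) = -(Wp k).eval u := by
  induction k with
  | zero => simp [Wp]
  | succ k ih => simp [Wp, ih]; ring

noncomputable def Qp (k : ℕ) : Polynomial ℝ := antider (Wp k)

lemma Qp_eval_zero (k : ℕ) : (Qp k).eval 0 = 0 := antider_eval_zero _

lemma polyMonoOn (p : Polynomial ℝ) (a b : ℝ)
    (h : ∀ u ∈ Set.Ioo a b, 0 ≤ (derivative p).eval u) :
    MonotoneOn (fun t => eval t p) (Set.Icc a b) := by
  apply monotoneOn_of_deriv_nonneg (convex_Icc a b)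
  · exact (p.continuous_aeval).continuousOn
  · exact (p.differentiable).differentiableOn
  · intro x hx
    rw [interior_Icc] at hx
    rw [Polynomial.deriv]
    exact h x hx

lemma Qp_even (k : ℕ) (t : ℝ) : (Qp k).eval (-t) = (Qp k).eval t := by
  have hd : Differentiable ℝ (fun s : ℝ => eval s (Qp k) - eval (-s) (Qp k)) := by
    apply Differentiable.sub (Qp k).differentiable
    exact (Qp k).differentiable.comp (differentiable_neg)
  have h0 : ∀ s, deriv (fun s : ℝ => eval s (Qp k) - eval (-s) (Qp k)) s = 0 := by
    intro s
    have hneg : DifferentiableAt ℝ (fun s : ℝ => eval (-s) (Qp k)) s := by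
      exact ((Qp k).differentiable.comp differentiable_neg) s
    rw [deriv_fun_sub ((Qp k).differentiable s) hneg]
    rw [Polynomial.deriv, deriv_comp_neg (fun x => eval x (Qp k)) s, Polynomial.deriv]
    rw [Qp, antider_derivative, Wp_odd]
    ring
  have := is_const_of_deriv_eq_zero hd h0 t 0
  simp only [neg_neg, neg_zero] at this
  have h00 : eval (0:ℝ) (Qp k) = 0 := Qp_eval_zero k
  linarith [this]

lemma Qp_mono (k : ℕ) : MonotoneOn (fun t => eval t (Qp k)) (Set.Icc (0:ℝ) 1) := by
  apply polyMonoOn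
  intro u hu
  rw [Qp, antider_derivative]
  exact le_trans hu.1.le (Wp_bounds k u hu.1.le hu.2.le).1

lemma Qp_lip (k : ℕ) : MonotoneOn (fun t => eval t (X - Qp k)) (Set.Icc (0:ℝ) 1) := by
  apply polyMonoOn
  intro u hu
  rw [derivative_sub, derivative_X, Qp, antider_derivative]
  simp only [eval_sub, eval_one]
  linarith [(Wp_bounds k u hu.1.le hu.2.le).2.1]

noncomputable def Rp (k : ℕ) : Polynomial ℝ :=
  C (2/((k:ℝ)+1)) * (1 - (1 - C (1/2:ℝ) * X)^(k+1))

lemma Rp_deriv_eval (k : ℕ) (u : ℝ) : eval u (derivative (Rp k)) = (1 - u/2)^k := by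
  have hk : ((k:ℝ)+1) ≠ 0 := by positivity
  unfold Rp
  rw [derivative_C_mul, derivative_sub, derivative_one, derivative_pow, derivative_sub,
    derivative_one, derivative_C_mul, derivative_X]
  rw [Nat.add_sub_cancel]
  simp only [eval_mul, eval_C, eval_sub, eval_pow, eval_one, eval_X, eval_neg, zero_sub,
    eval_zero, mul_one, Nat.cast_add, Nat.cast_one]
  field_simp

lemma Qp_err (k : ℕ) (s : ℝ) (h0 : 0 ≤ s) (h1 : s ≤ 1) :
    s - eval s (Qp k) ≤ 2/((k:ℝ)+1) := by
  have hmono : MonotoneOn (fun t => eval t (Rp k - (X - Qp k))) (Set.Icc (0:ℝ) 1) := by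
    apply polyMonoOn
    intro u hu
    rw [derivative_sub, derivative_sub, derivative_X, Qp, antider_derivative]
    simp only [eval_sub, eval_one]
    rw [Rp_deriv_eval]
    have := (Wp_bounds k u hu.1.le hu.2.le).2.2
    linarith
  have h00 : eval (0:ℝ) (Rp k - (X - Qp k)) = 0 := by
    simp [Rp, Qp_eval_zero]
  have hle := hmono (Set.mem_Icc.2 ⟨le_refl 0, zero_le_one⟩) (Set.mem_Icc.2 ⟨h0, h1⟩) h0
  simp only [] at hle
  rw [h00] at hle
  simp only [eval_sub, eval_X] at hle
  have hRle : eval s (Rp k) ≤ 2/((k:ℝ)+1) := by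
    simp only [Rp, eval_mul, eval_C, eval_sub, eval_one, eval_pow, eval_X]
    have hp : (0:ℝ) ≤ (1 - 1/2*s)^(k+1) := by
      apply pow_nonneg; linarith
    have hc : (0:ℝ) ≤ 2/((k:ℝ)+1) := by positivity
    nlinarith
  linarith

lemma combine (C ε : ℝ) (hC : 0 ≤ C) (hε : 0 < ε) :
    ∃ q : ℝ → ℝ,
      (∃ p : Polynomial ℝ, p.coeff 0 = 0 ∧ ∀ t, eval t p = q t) ∧
      (∀ u v : ℝ, |u| ≤ C → |v| ≤ C →
        min u v ≤ (u+v)/2 + q (u-v)/2 ∧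
        (u+v)/2 + q (u-v)/2 ≤ max u v ∧
        max u v ≤ (u+v)/2 + q (u-v)/2 + ε) ∧
      (∀ u v u' v' : ℝ, |u| ≤ C → |v| ≤ C → |u'| ≤ C → |v'| ≤ C →
        |((u+v)/2 + q (u-v)/2) - ((u'+v')/2 + q (u'-v')/2)| ≤ max |u-u'| |v-v'|) := by
  set D : ℝ := 4*C+1 with hDdef
  have hD : 0 < D := by simp only [hDdef]; linarith
  obtain ⟨k, hk⟩ := exists_nat_ge (D/ε)
  have hkey : D * (2/((k:ℝ)+1)) ≤ 2*ε := by
    have hk1 : (0:ℝ) < (k:ℝ)+1 := by positivity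
    have h1 : D ≤ ε * (k:ℝ) := by
      have := (div_le_iff₀ hε).mp hk
      linarith
    rw [mul_div_assoc' , div_le_iff₀ hk1]
    nlinarith
  set q : ℝ → ℝ := fun t => D * eval (t/D) (Qp k) with hqdef
  have hq0 : q 0 = 0 := by simp [hqdef, Qp_eval_zero]
  have heven : ∀ t, q (-t) = q t := by
    intro t
    simp only [hqdef, neg_div]
    rw [Qp_even]
  have hmonolip : ∀ s s' : ℝ, 0 ≤ s' → s' ≤ s → s ≤ D →
      q s' ≤ q s ∧ q s - q s' ≤ s - s' := by
    intro s s' h0 h1 h2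
    have hs'm : s'/D ∈ Set.Icc (0:ℝ) 1 := by
      constructor
      · positivity
      · rw [div_le_one hD]; linarith
    have hsm : s/D ∈ Set.Icc (0:ℝ) 1 := by
      constructor
      · have : 0 ≤ s := le_trans h0 h1
        positivity
      · rw [div_le_one hD]; linarith
    have hdiv : s'/D ≤ s/D := by gcongr
    constructor
    · have := Qp_mono k hs'm hsm hdiv
      simp only [hqdef]
      nlinarith
    · have := Qp_lip k hs'm hsm hdiv
      simp only [eval_sub, eval_X] at this
      simp only [hqdef]
      have hD' : D ≠ 0 := ne_of_gt hD
      have e1 : s'/D*D = s' := div_mul_cancel₀ _ hD'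
      have e2 : s/D*D = s := div_mul_cancel₀ _ hD'
      nlinarith
  have hnn : ∀ s : ℝ, 0 ≤ s → s ≤ D → 0 ≤ q s ∧ q s ≤ s := by
    intro s h0 h1
    obtain ⟨ha, hb⟩ := hmonolip s 0 (le_refl 0) h0 h1
    rw [hq0] at ha hb
    constructor <;> linarith
  have herr : ∀ s : ℝ, 0 ≤ s → s ≤ D → s - q s ≤ 2*ε := by
    intro s h0 h1
    have hsm0 : 0 ≤ s/D := by positivity
    have hsm1 : s/D ≤ 1 := by rw [div_le_one hD]; linarith
    have := Qp_err k (s/D) hsm0 hsm1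
    have hD' : D ≠ 0 := ne_of_gt hD
    have e2 : s/D*D = s := div_mul_cancel₀ _ hD'
    have h3 : D * (s/D - eval (s/D) (Qp k)) ≤ D * (2/((k:ℝ)+1)) := by
      apply mul_le_mul_of_nonneg_left this hD.le
    simp only [hqdef]
    nlinarith
  have hqabs : ∀ t : ℝ, q t = q |t| := by
    intro t
    rcases abs_cases t with ⟨h, _⟩ | ⟨h, _⟩
    · rw [h]
    · rw [h]; exact (heven t).symm
  have glip : ∀ a b : ℝ, |a| ≤ D → |b| ≤ D → |q a - q b| ≤ |a - b| := by
    have main : ∀ a b : ℝ, |a| ≤ D → |b| ≤ D → |b| ≤ |a| → |q a - q b| ≤ |a - b| := by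
      intro a b ha hb hba
      obtain ⟨h1, h2⟩ := hmonolip |a| |b| (abs_nonneg b) hba ha
      rw [hqabs a, hqabs b]
      have h3 : |b| - |a| ≤ |a - b| ∧ |a| - |b| ≤ |a - b| := by
        constructor
        · calc |b| - |a| ≤ |b - a| := abs_sub_abs_le_abs_sub b a
            _ = |a - b| := abs_sub_comm b a
        · exact le_trans (abs_sub_abs_le_abs_sub a b) (le_refl _)
      rw [abs_sub_le_iff]
      constructor <;> linarith [h3.1, h3.2]
    intro a b ha hb
    rcases le_total |b| |a| with h | h
    · exact main a b ha hb h
    · rw [abs_sub_comm, abs_sub_comm a b]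
      exact main b a hb ha h
  -- the three pointwise properties
  refine ⟨q, ⟨Polynomial.C D * (Qp k).comp (Polynomial.C D⁻¹ * X), ?_, ?_⟩, ?_, ?_⟩
  · rw [coeff_zero_eq_eval_zero]
    simp [Qp_eval_zero]
  · intro t
    simp only [eval_mul, eval_C, eval_comp, eval_X, hqdef]
    rw [div_eq_mul_inv, mul_comm t D⁻¹]
  · intro u v hu hv
    have hs : |u - v| ≤ D := by
      rw [abs_le] at hu hv ⊢
      constructor <;> simp only [hDdef] <;> linarith [hu.1, hu.2, hv.1, hv.2]
    rcases le_total u v with h | h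
    · have harg : q (u - v) = q (v - u) := by
        rw [show u - v = -(v-u) by ring, heven]
      obtain ⟨hn1, hn2⟩ := hnn (v - u) (by linarith) (by rw [abs_le] at hs; linarith [hs.1])
      have he := herr (v - u) (by linarith) (by rw [abs_le] at hs; linarith [hs.1])
      rw [min_eq_left h, max_eq_right h, harg]
      refine ⟨by linarith, by linarith, by linarith⟩
    · obtain ⟨hn1, hn2⟩ := hnn (u - v) (by linarith) (by rw [abs_le] at hs; linarith [hs.2])
      have he := herr (u - v) (by linarith) (by rw [abs_le] at hs; linarith [hs.2])
      rw [min_eq_right h, max_eq_left h]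
      refine ⟨by linarith, by linarith, by linarith⟩
  · -- Lipschitz-type property
    have hmonu : ∀ u₁ u₂ v : ℝ, |u₁ - v| ≤ D → |u₂ - v| ≤ D → u₁ ≤ u₂ →
        (u₁+v)/2 + q (u₁-v)/2 ≤ (u₂+v)/2 + q (u₂-v)/2 := by
      intro u₁ u₂ v h1 h2 h12
      have := glip (u₂ - v) (u₁ - v) h2 h1
      rw [show (u₂ - v) - (u₁ - v) = u₂ - u₁ by ring, abs_of_nonneg (by linarith : (0:ℝ) ≤ u₂ - u₁), abs_le] at this
      linarith [this.1]
    have hmonv : ∀ u v₁ v₂ : ℝ, |u - v₁| ≤ D → |u - v₂| ≤ D → v₁ ≤ v₂ →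
        (u+v₁)/2 + q (u-v₁)/2 ≤ (u+v₂)/2 + q (u-v₂)/2 := by
      intro u v₁ v₂ h1 h2 h12
      have := glip (u - v₁) (u - v₂) h1 h2
      rw [show (u - v₁) - (u - v₂) = v₂ - v₁ by ring, abs_of_nonneg (by linarith : (0:ℝ) ≤ v₂ - v₁), abs_le] at this
      linarith [this.1]
    have side : ∀ u v u' v' : ℝ, |u| ≤ C → |v| ≤ C → |u'| ≤ C → |v'| ≤ C →
        ((u+v)/2 + q (u-v)/2) - ((u'+v')/2 + q (u'-v')/2) ≤ max |u-u'| |v-v'| := by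
      intro u v u' v' hu hv hu' hv'
      set m : ℝ := max |u-u'| |v-v'| with hmdef
      have hmu : |u - u'| ≤ m := le_max_left _ _
      have hmv : |v - v'| ≤ m := le_max_right _ _
      rw [abs_le] at hu hv hu' hv' hmu hmv
      have hm2C : m ≤ 2*C := by
        rw [hmdef]
        apply max_le <;> rw [abs_le] <;> constructor <;> linarith [hu.1, hu.2, hu'.1, hu'.2, hv.1, hv.2, hv'.1, hv'.2]
      have hm0 : 0 ≤ m := le_trans (abs_nonneg _) (le_max_left _ _)
      have b1 : |u - v| ≤ D := by rw [abs_le]; constructor <;> simp only [hDdef] <;> linarith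
      have b2 : |(u'+m) - v| ≤ D := by rw [abs_le]; constructor <;> simp only [hDdef] <;> linarith
      have b3 : |(u'+m) - (v'+m)| ≤ D := by
        rw [show (u'+m) - (v'+m) = u' - v' by ring, abs_le]
        constructor <;> simp only [hDdef] <;> linarith
      have s1 : (u+v)/2 + q (u-v)/2 ≤ ((u'+m)+v)/2 + q ((u'+m)-v)/2 :=
        hmonu u (u'+m) v b1 b2 (by linarith)
      have s2 : ((u'+m)+v)/2 + q ((u'+m)-v)/2 ≤ ((u'+m)+(v'+m))/2 + q ((u'+m)-(v'+m))/2 :=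
        hmonv (u'+m) v (v'+m) b2 b3 (by linarith)
      have s3 : ((u'+m)+(v'+m))/2 + q ((u'+m)-(v'+m))/2 = ((u'+v')/2 + q (u'-v')/2) + m := by
        rw [show (u'+m) - (v'+m) = u' - v' by ring]
        ring
      linarith
    intro u v u' v' hu hv hu' hv'
    rw [abs_sub_le_iff]
    constructor
    · exact side u v u' v' hu hv hu' hv'
    · have := side u' v' u v hu' hv' hu hv
      rw [abs_sub_comm u' u, abs_sub_comm v' v] at this
      exact this




lemma poly_mem {X : Type*} (A : NonUnitalSubalgebra ℝ (X → ℝ)) (p : Polynomial ℝ)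
    (hp : p.coeff 0 = 0) (c : X → ℝ) (hc : c ∈ A) : (fun x => eval (c x) p) ∈ A := by
  have hpow : ∀ n : ℕ, (fun x => (c x)^(n+1)) ∈ A := by
    intro n
    induction n with
    | zero => simpa using hc
    | succ n ih =>
      have := mul_mem ih hc
      have heq : (fun x => (c x)^(n+1)) * c = fun x => (c x)^(n+1+1) := by
        funext x
        simp [pow_succ]
      rwa [heq] at this
  have heq : (fun x => eval (c x) p) =
      ∑ i ∈ Finset.range (p.natDegree + 1), fun x => p.coeff i * (c x)^i := by
    funext x
    rw [Finset.sum_apply]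
    exact eval_eq_sum_range (c x)
  rw [heq]
  apply sum_mem
  intro i _
  match i with
  | 0 =>
    have : (fun x => p.coeff 0 * (c x)^0) = (0 : X → ℝ) := by
      funext x; simp [hp]
    rw [this]; exact zero_mem A
  | (j+1) =>
    have : (fun x => p.coeff (j+1) * (c x)^(j+1)) = p.coeff (j+1) • (fun x => (c x)^(j+1)) := by
      funext x; simp
    rw [this]
    exact SMulMemClass.smul_mem _ (hpow j)

lemma key {X : Type*} (A : NonUnitalSubalgebra ℝ (X → ℝ)) (C : ℝ) :
    ∀ (n : ℕ) (F : Fin (n+1) → X → ℝ), (∀ m, F m ∈ A) → (∀ m x, |F m x| ≤ C) →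
    ∀ ε : ℝ, 0 < ε → ∃ g ∈ A,
      (∀ x, ∃ m, F m x ≤ g x) ∧ (∀ x, ∃ m, g x ≤ F m x) ∧ (∀ x m, F m x ≤ g x + ε)
      ∧ (∀ y z, ∃ m, |g y - g z| ≤ |F m y - F m z|) := by
  intro n
  induction n with
  | zero =>
    intro F hFA hFC ε hε
    refine ⟨F 0, hFA 0, fun x => ⟨0, le_refl _⟩, fun x => ⟨0, le_refl _⟩, ?_, fun y z => ⟨0, le_refl _⟩⟩
    intro x m
    have : m = 0 := Fin.fin_one_eq_zero m
    rw [this]; linarith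
  | succ n ih =>
    intro F hFA hFC ε hε
    rcases isEmpty_or_nonempty X with hX | hX
    · exact ⟨F 0, hFA 0, fun x => (IsEmpty.false x).elim, fun x => (IsEmpty.false x).elim,
        fun x => (IsEmpty.false x).elim, fun y => (IsEmpty.false y).elim⟩
    obtain ⟨x₀⟩ := hX
    have hC : 0 ≤ C := le_trans (abs_nonneg _) (hFC 0 x₀)
    obtain ⟨g₁, hg₁A, h1, h2, h3, h4⟩ :=
      ih (fun m => F m.castSucc) (fun m => hFA _) (fun m x => hFC _ x) (ε/2) (by linarith)
    have hg₁C : ∀ x, |g₁ x| ≤ C := by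
      intro x
      obtain ⟨m1, hm1⟩ := h1 x
      obtain ⟨m2, hm2⟩ := h2 x
      rw [abs_le]
      have b1 := (abs_le.mp (hFC m1.castSucc x)).1
      have b2 := (abs_le.mp (hFC m2.castSucc x)).2
      constructor <;> linarith
    obtain ⟨q, ⟨p, hp0, hpq⟩, hφ1, hφ3⟩ := combine C (ε/2) hC (by linarith)
    set b := F (Fin.last (n+1)) with hbdef
    have hbA : b ∈ A := hFA _
    have hbC : ∀ x, |b x| ≤ C := fun x => hFC _ x
    set g : X → ℝ := fun x => (g₁ x + b x)/2 + q (g₁ x - b x)/2 with hgdef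
    have hgA : g ∈ A := by
      have h5 : (fun x => eval ((g₁ - b) x) p) ∈ A := poly_mem A p hp0 _ (sub_mem hg₁A hbA)
      have heq : g = (2:ℝ)⁻¹ • ((g₁ + b) + fun x => eval ((g₁ - b) x) p) := by
        funext x
        simp only [hgdef, Pi.smul_apply, Pi.add_apply, Pi.sub_apply, smul_eq_mul]
        rw [hpq]
        ring
      rw [heq]
      exact SMulMemClass.smul_mem _ (add_mem (add_mem hg₁A hbA) h5)
    refine ⟨g, hgA, ?_, ?_, ?_, ?_⟩
    · intro x
      obtain ⟨hm1, hm2, hm3⟩ := hφ1 (g₁ x) (b x) (hg₁C x) (hbC x)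
      rcases le_total (g₁ x) (b x) with h | h
      · obtain ⟨m, hm⟩ := h1 x
        refine ⟨m.castSucc, ?_⟩
        rw [min_eq_left h] at hm1
        exact le_trans hm hm1
      · refine ⟨Fin.last (n+1), ?_⟩
        rw [min_eq_right h] at hm1
        exact hm1
    · intro x
      obtain ⟨hm1, hm2, hm3⟩ := hφ1 (g₁ x) (b x) (hg₁C x) (hbC x)
      rcases le_total (g₁ x) (b x) with h | h
      · refine ⟨Fin.last (n+1), ?_⟩
        rw [max_eq_right h] at hm2
        exact hm2
      · obtain ⟨m, hm⟩ := h2 x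
        refine ⟨m.castSucc, ?_⟩
        rw [max_eq_left h] at hm2
        exact le_trans hm2 hm
    · intro x m
      obtain ⟨hm1, hm2, hm3⟩ := hφ1 (g₁ x) (b x) (hg₁C x) (hbC x)
      have hgx : g x = (g₁ x + b x)/2 + q (g₁ x - b x)/2 := rfl
      induction m using Fin.lastCases with
      | last =>
        rw [← hbdef, hgx]
        have : b x ≤ max (g₁ x) (b x) := le_max_right _ _
        linarith
      | cast m' =>
        rw [hgx]
        have ha := h3 x m'
        have : g₁ x ≤ max (g₁ x) (b x) := le_max_left _ _
        linarith
    · intro y z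
      have := hφ3 (g₁ y) (b y) (g₁ z) (b z) (hg₁C y) (hbC y) (hg₁C z) (hbC z)
      rcases le_total |g₁ y - g₁ z| |b y - b z| with h | h
      · refine ⟨Fin.last (n+1), ?_⟩
        rw [max_eq_right h] at this
        exact this
      · obtain ⟨m, hm⟩ := h4 y z
        refine ⟨m.castSucc, ?_⟩
        rw [max_eq_left h] at this
        exact le_trans this hm

theorem stmt2 {X : Type*} (A : NonUnitalSubalgebra ℝ (X → ℝ))
    (hAb : ∀ f ∈ A, ∃ C : ℝ, ∀ x, |f x| ≤ C)
    (M : ℕ) (hM : 0 < M) (F : Fin M → X → ℝ) (hF : ∀ m, F m ∈ A)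
    (δ : X → X → ℝ≥0∞)
    (hδ0 : ∀ x, δ x x = 0) (hδsymm : ∀ x y, δ x y = δ y x)
    (hδtri : ∀ x y z, δ x z ≤ δ x y + δ y z)
    (S : Set X) (L : ℝ≥0) (hFlip : ∀ m, eLip δ (F m) S ≤ (L : ℝ≥0∞)) :
    ∀ ε > (0 : ℝ), ∃ g ∈ A,
      (∀ x, (⨅ m, F m x) ≤ g x ∧ g x ≤ ⨆ m, F m x) ∧
      (∀ x, |g x - ⨆ m, F m x| ≤ ε) ∧
      eLip δ g S ≤ (L : ℝ≥0∞) := by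
  intro ε hε
  obtain ⟨n, rfl⟩ : ∃ n, M = n + 1 := ⟨M - 1, (Nat.succ_pred_eq_of_pos hM).symm⟩
  choose bd hbd using fun m => hAb (F m) (hF m)
  set C : ℝ := ∑ m, |bd m| with hCdef
  have hFC : ∀ m x, |F m x| ≤ C := by
    intro m x
    calc |F m x| ≤ bd m := hbd m x
      _ ≤ |bd m| := le_abs_self _
      _ ≤ C := Finset.single_le_sum (f := fun m => |bd m|) (fun i _ => abs_nonneg _)
        (Finset.mem_univ m)
  obtain ⟨g, hgA, h1, h2, h3, h4⟩ := key A C n F hF hFC ε hε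
  refine ⟨g, hgA, ?_, ?_, ?_⟩
  · intro x
    constructor
    · obtain ⟨m, hm⟩ := h1 x
      exact le_trans (ciInf_le (Finite.bddBelow_range (fun m => F m x)) m) hm
    · obtain ⟨m, hm⟩ := h2 x
      exact le_trans hm (le_ciSup (Finite.bddAbove_range (fun m => F m x)) m)
  · intro x
    rw [abs_le]
    constructor
    · have : (⨆ m, F m x) ≤ g x + ε := ciSup_le (fun m => h3 x m)
      linarith
    · obtain ⟨m, hm⟩ := h2 x
      have : g x ≤ ⨆ m, F m x := le_trans hm (le_ciSup (Finite.bddAbove_range (fun m => F m x)) m)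
      linarith
  · refine le_of_forall_gt_imp_ge_of_dense fun L' hL' => ?_
    have hpt : ∀ m, ∀ y ∈ S, ∀ z ∈ S, ENNReal.ofReal |F m y - F m z| ≤ L' * δ y z := by
      intro m
      have hlt : eLip δ (F m) S < L' := lt_of_le_of_lt (hFlip m) hL'
      rw [eLip, sInf_lt_iff] at hlt
      obtain ⟨ℓ, hℓmem, hℓlt⟩ := hlt
      intro y hy z hz
      exact le_trans (hℓmem y hy z hz) (by gcongr)
    apply sInf_le
    intro y hy z hz
    obtain ⟨m, hm⟩ := h4 y z
    exact le_trans (ENNReal.ofReal_le_ofReal hm) (hpt m y hy z hz)
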